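/- Suppose 3 does not divide P, and let δ = ord_3(P^2 + 2). Then for all k ≥ δ and all natural numbers n, v_{n + 4·3^(k−δ)} ≡ −v_n (mod 3^k). -/

import Mathlib

def u (P : ℤ) : ℕ → ℤ
  | 0 => 0
  | 1 => 1
  | n + 2 => P * u P (n + 1) + u P n

def v (P : ℤ) : ℕ → ℤ
  | 0 => 2
  | 1 => P
  | n + 2 => P * v P (n + 1) + v P n

lemma u_rec (P : ℤ) (n : ℕ) : u P (n+2) = P * u P (n+1) + u P n := rfl
lemma v_rec (P : ℤ) (n : ℕ) : v P (n+2) = P * v P (n+1) + v P n := rfl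

lemma v_eq_u (P : ℤ) (m : ℕ) : v P (m+1) = u P (m+2) + u P m := by
  induction m using Nat.twoStepInduction with
  | zero => simp [u, v]
  | one => simp [u, v]; ring
  | more m ih1 ih2 =>
    simp only [add_assoc, Nat.reduceAdd] at ih1 ih2 ⊢
    have r1 : v P (m+3) = P * v P (m+2) + v P (m+1) := v_rec P (m+1)
    have r2 : u P (m+4) = P * u P (m+3) + u P (m+2) := u_rec P (m+2)
    have r3 : u P (m+2) = P * u P (m+1) + u P m := u_rec P m
    linear_combination r1 - r2 + P * ih2 + ih1 - r3

lemma u_add (P : ℤ) (m : ℕ) : ∀ n : ℕ, u P (m+n+1) = u P (m+1) * u P (n+1) + u P m * u P n := by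
  intro n
  induction n using Nat.twoStepInduction with
  | zero => simp [u]
  | one => simp [u]; ring
  | more n ih1 ih2 =>
    simp only [add_assoc, Nat.reduceAdd] at ih1 ih2 ⊢
    have r1 : u P (m+(n+3)) = P * u P (m+(n+2)) + u P (m+(n+1)) := u_rec P (m+n+1)
    have r2 : u P (n+3) = P * u P (n+2) + u P (n+1) := u_rec P (n+1)
    have r3 : u P (n+2) = P * u P (n+1) + u P n := u_rec P n
    linear_combination r1 + P * ih2 + ih1 - u P (m+1) * r2 - u P m * r3

lemma v_add (P : ℤ) (m : ℕ) : ∀ n : ℕ, v P (m+n+1) = v P (m+1) * u P (n+1) + v P m * u P n := by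
  intro n
  induction n using Nat.twoStepInduction with
  | zero => simp [u]
  | one => simp [u, v_rec]; ring
  | more n ih1 ih2 =>
    simp only [add_assoc, Nat.reduceAdd] at ih1 ih2 ⊢
    have r1 : v P (m+(n+3)) = P * v P (m+(n+2)) + v P (m+(n+1)) := v_rec P (m+n+1)
    have r2 : u P (n+3) = P * u P (n+2) + u P (n+1) := u_rec P (n+1)
    have r3 : u P (n+2) = P * u P (n+1) + u P n := u_rec P n
    linear_combination r1 + P * ih2 + ih1 - v P (m+1) * r2 - v P m * r3

lemma cassini (P : ℤ) (m : ℕ) : u P (m+2) * u P m - u P (m+1)^2 = (-1:ℤ)^(m+1) := by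
  induction m with
  | zero => simp [u]
  | succ m ih =>
    simp only [add_assoc, Nat.reduceAdd] at ih ⊢
    rw [pow_succ]
    have r1 : u P (m+3) = P * u P (m+2) + u P (m+1) := u_rec P (m+1)
    have r2 : u P (m+2) = P * u P (m+1) + u P m := u_rec P m
    linear_combination u P (m+1) * r1 - u P (m+2) * r2 - ih

lemma uv_norm (P : ℤ) (n : ℕ) : v P n ^ 2 - (P^2+4) * u P n ^ 2 = 4 * (-1:ℤ)^n := by
  cases n with
  | zero => simp [u, v]
  | succ m =>
    rw [v_eq_u]
    have r : u P (m+2) = P * u P (m+1) + u P m := u_rec P m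
    linear_combination 4 * cassini P m + (u P (m+2) - u P m + P * u P (m+1)) * r

lemma two_u (P : ℤ) (m : ℕ) : 2 * u P (m+1) = v P m + P * u P m := by
  induction m using Nat.twoStepInduction with
  | zero => simp [u, v]
  | one => simp [u, v]; ring
  | more m ih1 ih2 =>
    simp only [add_assoc, Nat.reduceAdd] at ih1 ih2 ⊢
    have r1 : u P (m+3) = P * u P (m+2) + u P (m+1) := u_rec P (m+1)
    have r2 : v P (m+2) = P * v P (m+1) + v P m := v_rec P m
    linear_combination 2 * r1 - r2 + ih1 + P * ih2
      - P * (u_rec P m)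

lemma two_v (P : ℤ) (m : ℕ) : 2 * v P (m+1) = P * v P m + (P^2+4) * u P m := by
  induction m using Nat.twoStepInduction with
  | zero => simp [u, v]; ring
  | one => simp [u, v]; ring
  | more m ih1 ih2 =>
    simp only [add_assoc, Nat.reduceAdd] at ih1 ih2 ⊢
    have r1 : v P (m+3) = P * v P (m+2) + v P (m+1) := v_rec P (m+1)
    have r2 : v P (m+2) = P * v P (m+1) + v P m := v_rec P m
    linear_combination 2 * r1 - P * r2 + ih1 + P * ih2
      - (P^2+4) * (u_rec P m)

lemma two_u_add (P : ℤ) (m n : ℕ) :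
    2 * u P (m+n+1) = v P m * u P (n+1) + u P m * v P (n+1) := by
  have h := u_add P m n
  have h2 := two_u P m
  have h3 := v_eq_u P n
  have h4 := u_rec P n
  linear_combination 2 * h + u P (n+1) * h2 - u P m * h3 - u P m * h4

lemma two_v_add (P : ℤ) (m n : ℕ) :
    2 * v P (m+n+1) = v P m * v P (n+1) + (P^2+4) * u P m * u P (n+1) := by
  have h := v_add P m n
  have h2 := two_v P m
  have h3 := v_eq_u P n
  have h4 := u_rec P n
  linear_combination 2 * h + u P (n+1) * h2 - v P m * h3 - v P m * h4

lemma u4' (P : ℤ) : u P 4 = P * (P^2+2) := by simp [u]; ring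
lemma v4' (P : ℤ) : v P 4 + 2 = (P^2+2)^2 := by simp [u, v]; ring

lemma zmod3_aux : ∀ x : ZMod 3, x ≠ 0 → x^2 + 2 = 0 := by decide

lemma u_double (P : ℤ) (s : ℕ) : u P (2*(s+1)) = u P (s+1) * v P (s+1) := by
  have h := two_u_add P (s+1) s
  rw [show s+1+s+1 = 2*(s+1) from by omega] at h
  have : (2:ℤ) * u P (2*(s+1)) = 2 * (u P (s+1) * v P (s+1)) := by linear_combination h
  exact mul_left_cancel₀ two_ne_zero this

lemma v_double (P : ℤ) (s : ℕ) : v P (2*(s+1)) = v P (s+1)^2 - 2*(-1:ℤ)^(s+1) := by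
  have h := two_v_add P (s+1) s
  rw [show s+1+s+1 = 2*(s+1) from by omega] at h
  have hn := uv_norm P (s+1)
  have : (2:ℤ) * v P (2*(s+1)) = 2 * (v P (s+1)^2 - 2*(-1:ℤ)^(s+1)) := by
    linear_combination h - hn
  exact mul_left_cancel₀ two_ne_zero this

lemma u_triple (P : ℤ) (s : ℕ) :
    u P (3*(s+1)) = u P (s+1) * (v P (s+1)^2 - (-1:ℤ)^(s+1)) := by
  have h := two_u_add P (2*(s+1)) s
  rw [show 2*(s+1)+s+1 = 3*(s+1) from by omega] at h
  rw [u_double, v_double] at h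
  have : (2:ℤ) * u P (3*(s+1)) = 2 * (u P (s+1) * (v P (s+1)^2 - (-1:ℤ)^(s+1))) := by
    linear_combination h
  exact mul_left_cancel₀ two_ne_zero this

lemma v_triple (P : ℤ) (s : ℕ) :
    v P (3*(s+1)) = v P (s+1) * (v P (s+1)^2 - 3*(-1:ℤ)^(s+1)) := by
  have h := two_v_add P (2*(s+1)) s
  rw [show 2*(s+1)+s+1 = 3*(s+1) from by omega] at h
  rw [u_double, v_double] at h
  have hn := uv_norm P (s+1)
  have : (2:ℤ) * v P (3*(s+1)) = 2 * (v P (s+1) * (v P (s+1)^2 - 3*(-1:ℤ)^(s+1))) := by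
    linear_combination h - v P (s+1) * hn
  exact mul_left_cancel₀ two_ne_zero this

lemma main_dvd (P : ℤ) (a : ℕ) (ha : 1 ≤ a) (hd : (3:ℤ)^a ∣ P^2+2) :
    ∀ j : ℕ, (3:ℤ)^(a+j) ∣ u P (4*3^j) ∧ (3:ℤ)^(a+j) ∣ v P (4*3^j) + 2 := by
  intro j
  induction j with
  | zero =>
    rw [show (4*3^0 : ℕ) = 4 from rfl]
    rw [Nat.add_zero]
    exact ⟨by rw [u4']; exact hd.mul_left P, by rw [v4']; exact dvd_pow hd two_ne_zero⟩
  | succ j ih =>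
    obtain ⟨hu, hv⟩ := ih
    obtain ⟨s, hs⟩ : ∃ s, 4*3^j = s+1 := by
      have h0 : 0 < 4*3^j := by positivity
      exact ⟨4*3^j - 1, by omega⟩
    have heps : (-1:ℤ)^(s+1) = 1 := by
      rw [← hs]; exact Even.neg_one_pow ⟨2*3^j, by ring⟩
    have hidx : 4*3^(j+1) = 3*(s+1) := by rw [← hs]; ring
    rw [hs] at hu hv
    have h3v : (3:ℤ) ∣ v P (s+1) + 2 :=
      dvd_trans (dvd_pow_self 3 (by omega : a+j ≠ 0)) hv
    have h3m : (3:ℤ) ∣ v P (s+1) - 1 := by omega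
    have hp : (3:ℤ)^(a+(j+1)) = 3^(a+j) * 3 := by ring
    constructor
    · rw [hidx, u_triple, heps, hp]
      refine mul_dvd_mul hu ?_
      have h : v P (s+1)^2 - 1 = (v P (s+1) - 1) * (v P (s+1) + 1) := by ring
      rw [h]; exact h3m.mul_right _
    · rw [hidx, hp]
      have hid : v P (3*(s+1)) + 2 = (v P (s+1) + 2) * (v P (s+1) - 1)^2 := by
        have h := v_triple P s
        rw [heps] at h
        linear_combination h
      rw [hid]
      exact mul_dvd_mul hv (dvd_pow h3m two_ne_zero)

theorem v_half_period (P : ℤ) (hP : ¬ (3 ∣ P)) (k : ℕ)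
    (hk : padicValInt 3 (P ^ 2 + 2) ≤ k) (n : ℕ) :
    v P (n + 4 * 3 ^ (k - padicValInt 3 (P ^ 2 + 2))) ≡ -v P n [ZMOD (3 : ℤ) ^ k] := by
  have : Fact (Nat.Prime 3) := ⟨by norm_num⟩
  set d := padicValInt 3 (P ^ 2 + 2) with hdref
  have hne : P^2+2 ≠ 0 := by positivity
  have hx : (P : ZMod 3) ≠ 0 := fun h => hP ((ZMod.intCast_zmod_eq_zero_iff_dvd P 3).mp h)
  have h3 : (3:ℤ) ∣ P^2 + 2 := by
    refine (ZMod.intCast_zmod_eq_zero_iff_dvd (P^2+2) 3).mp ?_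
    push_cast
    exact zmod3_aux _ hx
  have hd1 : 1 ≤ d := by
    rcases (padicValInt_dvd_iff 1 (P^2+2)).mp (by rw [pow_one]; exact_mod_cast h3) with h | h
    · exact absurd h hne
    · exact h
  have hdd : (3:ℤ)^d ∣ P^2+2 := padicValInt_dvd _
  have hmain := main_dvd P d hd1 hdd (k - d)
  rw [show d + (k - d) = k from by omega] at hmain
  obtain ⟨hu, hv⟩ := hmain
  obtain ⟨t, ht⟩ : ∃ t, 4*3^(k-d) = t+2 := by
    have h0 : 0 < 3^(k-d) := by positivity
    exact ⟨4*3^(k-d) - 2, by omega⟩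
  rw [ht] at hu hv
  have e1 : v P (t+2) = u P (t+3) + u P (t+1) := v_eq_u P (t+1)
  have e2 : u P (t+3) = P * u P (t+2) + u P (t+1) := u_rec P (t+1)
  have hkey : (2:ℤ) * (u P (t+1) + 1) = (v P (t+2) + 2) - P * u P (t+2) := by
    linear_combination -e1 - e2
  have h2dvd : (3:ℤ)^k ∣ 2 * (u P (t+1) + 1) := by
    rw [hkey]; exact dvd_sub hv (hu.mul_left P)
  have hcop : IsCoprime ((3:ℤ)^k) 2 :=
    (Int.isCoprime_iff_gcd_eq_one.mpr (by norm_num)).pow_left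
  have hmid : (3:ℤ)^k ∣ u P (t+1) + 1 := hcop.dvd_of_dvd_mul_left h2dvd
  rw [ht]
  have hadd : v P (n+(t+2)) = v P (n+1) * u P (t+2) + v P n * u P (t+1) :=
    v_add P n (t+1)
  refine Int.ModEq.symm (Int.modEq_iff_dvd.mpr ?_)
  have hrw : v P (n+(t+2)) - -v P n = v P (n+1) * u P (t+2) + v P n * (u P (t+1)+1) := by
    linear_combination hadd
  rw [hrw]
  exact dvd_add (hu.mul_left _) (hmid.mul_left _)
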